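/- Let c ∈ ℝ and let v : ℤ → ℝ → ℝ be a family of differentiable functions with v_n(t) ≠ 0 for all n, t, satisfying for all n ∈ ℤ and t ∈ ℝ the equation v̇_n = v_n ( v_{n+2}/v_{n+1} + 2 v_{n+1}/v_n + 2 v_n/v_{n−1} + v_{n−1}/v_{n−2} ) + c v_n. Define u_n(t) = v_{n+1}(t)/v_n(t). Then for all n ∈ ℤ and t ∈ ℝ, u̇_n = u_n (u_{n+2} + u_{n+1} − u_{n−1} − u_{n−2}), i.e., u solves the INB equation. -/

import Mathlib

/-- Equation `v̇ₙ = vₙ(v_{n+2}/v_{n+1} + 2v_{n+1}/vₙ + 2vₙ/v_{n−1} + v_{n−1}/v_{n−2}) + c vₙ`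
is transformed into the INB equation by `uₙ = v_{n+1}/vₙ`. -/
theorem stmt_2 (c : ℝ) (v : ℤ → ℝ → ℝ)
    (hvne : ∀ (n : ℤ) (t : ℝ), v n t ≠ 0)
    (hv : ∀ (n : ℤ) (t : ℝ), HasDerivAt (v n)
      (v n t * (v (n + 2) t / v (n + 1) t + 2 * (v (n + 1) t / v n t)
        + 2 * (v n t / v (n - 1) t) + v (n - 1) t / v (n - 2) t) + c * v n t) t)
    (u : ℤ → ℝ → ℝ)
    (hu : ∀ (n : ℤ) (t : ℝ), u n t = v (n + 1) t / v n t) :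
    ∀ (n : ℤ) (t : ℝ), HasDerivAt (u n)
      (u n t * (u (n + 2) t + u (n + 1) t - u (n - 1) t - u (n - 2) t)) t := by
  intro n t
  have hd := ((hv (n + 1) t).div (hv n t) (hvne n t))
  have hfun : u n = fun s => v (n + 1) s / v n s := funext fun s => hu n s
  rw [hfun]
  refine hd.congr_deriv ?_
  have e1 : n + 1 + 2 = n + 3 := by ring
  have e2 : n + 1 + 1 = n + 2 := by ring
  have e3 : n + 1 - 1 = n := by ring
  have e4 : n + 1 - 2 = n - 1 := by ring
  have e5 : n + 2 + 1 = n + 3 := by ring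
  have e6 : n - 1 + 1 = n := by ring
  have e7 : n - 2 + 1 = n - 1 := by ring
  simp only [hu, e1, e2, e3, e4, e5, e6, e7]
  have h0 := hvne n t
  have h1 := hvne (n + 1) t
  have h2 := hvne (n + 2) t
  have h3 := hvne (n + 3) t
  have h4 := hvne (n - 1) t
  have h5 := hvne (n - 2) t
  field_simp
  ring
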